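/- Let D = ∏_{i=1}^d [a_i, b_i] ⊂ ℝ^d with a_i < b_i, let u ⊆ {1,…,d}, and let f : D → ℝ be |u| times continuously differentiable. Then for every anchor c ∈ D and every x ∈ D: f_{u,c}(x) = ∫_{D_u} ∂_u f(t^{u,c}) · M_u(t_u, x_u) dt_u, where ∂_u f := ∂^{|u|} f / ∏_{i∈u} ∂x_i, t^{u,c} ∈ D is the point whose i-th coordinate is t_i for i ∈ u and c_i for i ∉ u, the integral is over t_u ∈ D_u = ∏_{i∈u} [a_i, b_i] with respect to Lebesgue measure, and M_u(t_u, x_u) := ∏_{i∈u} M_i(t_i, x_i) with M_i(t_i, x_i) = 1 if c_i < t_i < x_i, M_i(t_i, x_i) = −1 if x_i < t_i < c_i, and M_i(t_i, x_i) = 0 otherwise. -/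

import Mathlib

open MeasureTheory

/-- The anchored decomposition term
`f_{u,c}(x) = Σ_{v ⊆ u} (−1)^{|u|−|v|} f(x^{v,c})`. -/
noncomputable def anchoredTerm {d : ℕ} (f : (Fin d → ℝ) → ℝ) (c : Fin d → ℝ)
    (u : Finset (Fin d)) (x : Fin d → ℝ) : ℝ :=
  ∑ v ∈ u.powerset, (-1 : ℝ) ^ (u.card - v.card) * f (fun i => if i ∈ v then x i else c i)

/-- The mixed partial derivative `∂_u f = ∂^{|u|} f / ∏_{i∈u} ∂x_i`. -/
noncomputable def mixedPartial {d : ℕ} (u : Finset (Fin d)) (f : (Fin d → ℝ) → ℝ) :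
    (Fin d → ℝ) → ℝ :=
  u.toList.foldr (fun i g => fun x => fderiv ℝ g x (Pi.single i 1)) f

/-- The kernel `M_i(t_i, x_i)` relative to the anchor coordinate `c_i`:
`1` if `c_i < t_i < x_i`, `−1` if `x_i < t_i < c_i`, `0` otherwise. -/
noncomputable def anchorKernel (c t x : ℝ) : ℝ :=
  if c < t ∧ t < x then 1 else if x < t ∧ t < c then -1 else 0

set_option maxHeartbeats 1000000

noncomputable def mfold {d : ℕ} (l : List (Fin d)) (f : (Fin d → ℝ) → ℝ) : (Fin d → ℝ) → ℝ :=
  l.foldr (fun i g => fun x => fderiv ℝ g x (Pi.single i 1)) f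

lemma contDiff_mfold {d : ℕ} (l : List (Fin d)) (m : ℕ) (f : (Fin d → ℝ) → ℝ)
    (hf : ContDiff ℝ (l.length + m : ℕ) f) : ContDiff ℝ (m : ℕ∞) (mfold l f) := by
  induction l generalizing m with
  | nil => simpa [mfold] using hf
  | cons j l' ih =>
    have h1 : ContDiff ℝ ((m + 1 : ℕ) : ℕ∞) (mfold l' f) := by
      apply ih
      convert hf using 2
      norm_cast
      simp [List.length_cons]
      omega
    exact (h1.fderiv_right (m := m) (by push_cast; rfl)).clm_apply contDiff_const

lemma measurable_anchorKernel (c x : ℝ) : Measurable (fun t => anchorKernel c t x) := by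
  unfold anchorKernel
  apply Measurable.ite
  · exact measurableSet_Ioo (a := c) (b := x)
  · exact measurable_const
  · exact Measurable.ite (measurableSet_Ioo (a := x) (b := c)) measurable_const measurable_const

lemma abs_anchorKernel_le (c t x : ℝ) : |anchorKernel c t x| ≤ 1 := by
  unfold anchorKernel; split_ifs <;> norm_num

lemma ftc_kernel {A B c x : ℝ} (g : ℝ → ℝ) (hg : ContDiff ℝ 1 g)
    (hc : c ∈ Set.Icc A B) (hx : x ∈ Set.Icc A B) :
    ∫ t in Set.Icc A B, deriv g t * anchorKernel c t x = g x - g c := by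
  have hcont : Continuous (deriv g) := hg.continuous_deriv le_rfl
  have hpt : ∀ t, deriv g t * anchorKernel c t x =
      (Set.Ioo c x).indicator (deriv g) t - (Set.Ioo x c).indicator (deriv g) t := by
    intro t
    unfold anchorKernel
    rcases lt_trichotomy c x with h | h | h
    · by_cases h1 : c < t ∧ t < x
      · have h2 : ¬ (x < t ∧ t < c) := fun h2 => absurd (h.trans h2.1) (not_lt.2 h2.2.le)
        simp [Set.indicator, Set.mem_Ioo, h1, h2]
      · have h2 : ¬ (x < t ∧ t < c) := fun h2 => absurd (h.trans h2.1) (not_lt.2 h2.2.le)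
        simp [Set.indicator, Set.mem_Ioo, h1, h2]
    · subst h
      have : ¬ (c < t ∧ t < c) := fun h2 => absurd h2.1 (not_lt.2 h2.2.le)
      simp [Set.indicator, Set.mem_Ioo, this]
    · by_cases h1 : x < t ∧ t < c
      · have h2 : ¬ (c < t ∧ t < x) := fun h2 => absurd (h.trans h2.1) (not_lt.2 h2.2.le)
        simp [Set.indicator, Set.mem_Ioo, h1, h2]
      · have h2 : ¬ (c < t ∧ t < x) := fun h2 => absurd (h.trans h2.1) (not_lt.2 h2.2.le)
        simp [Set.indicator, Set.mem_Ioo, h1, h2]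
  simp_rw [hpt]
  have hsub1 : Set.Ioo c x ⊆ Set.Icc A B :=
    fun t ht => ⟨hc.1.trans ht.1.le, ht.2.le.trans hx.2⟩
  have hsub2 : Set.Ioo x c ⊆ Set.Icc A B :=
    fun t ht => ⟨hx.1.trans ht.1.le, ht.2.le.trans hc.2⟩
  have hint1 : IntegrableOn ((Set.Ioo c x).indicator (deriv g)) (Set.Icc A B) :=
    (hcont.integrableOn_Icc).indicator measurableSet_Ioo
  have hint2 : IntegrableOn ((Set.Ioo x c).indicator (deriv g)) (Set.Icc A B) :=
    (hcont.integrableOn_Icc).indicator measurableSet_Ioo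
  rw [integral_sub hint1 hint2, setIntegral_indicator measurableSet_Ioo,
    setIntegral_indicator measurableSet_Ioo, Set.inter_eq_right.mpr hsub1,
    Set.inter_eq_right.mpr hsub2]
  have hdiff : ∀ (p q : ℝ), ∀ y ∈ Set.uIcc p q, DifferentiableAt ℝ g y :=
    fun _ _ y _ => (hg.differentiable one_ne_zero).differentiableAt
  rcases le_total c x with h | h
  · have he : Set.Ioo x c = ∅ := Set.Ioo_eq_empty (not_lt.2 h)
    have hftc := intervalIntegral.integral_deriv_eq_sub (hdiff c x)
      ((hcont.intervalIntegrable c x))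
    rw [intervalIntegral.integral_of_le h] at hftc
    rw [he, ← MeasureTheory.integral_Ioc_eq_integral_Ioo]
    simp [hftc]
  · have he : Set.Ioo c x = ∅ := Set.Ioo_eq_empty (not_lt.2 h)
    have hftc := intervalIntegral.integral_deriv_eq_sub (hdiff x c)
      ((hcont.intervalIntegrable x c))
    rw [intervalIntegral.integral_of_le h] at hftc
    rw [he, ← MeasureTheory.integral_Ioc_eq_integral_Ioo]
    simp [hftc]


section glue
variable {d : ℕ}

instance uniqJ (j : Fin d) : Unique {i : Fin d // i ∈ ({j} : Finset (Fin d))} where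
  default := ⟨j, Finset.mem_singleton_self j⟩
  uniq := fun ⟨i, hi⟩ => Subtype.ext (Finset.mem_singleton.1 hi)

noncomputable def glueEquiv (j : Fin d) (s : Finset (Fin d)) (hj : j ∉ s) :
    (({i : Fin d // i ∈ s} → ℝ) × ℝ) ≃ᵐ ({i : Fin d // i ∈ insert j s} → ℝ) :=
  ((MeasurableEquiv.refl _).prodCongr
      (MeasurableEquiv.funUnique {i : Fin d // i ∈ ({j} : Finset (Fin d))} ℝ).symm).trans <|
    (MeasurableEquiv.piFinsetUnion (fun _ => ℝ)
        (Finset.disjoint_singleton_right.mpr hj)).trans <|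
      MeasurableEquiv.piCongrLeft (fun _ => ℝ)
        (Equiv.subtypeEquivRight (fun i => by
          simp [Finset.mem_union, Finset.mem_insert, Finset.mem_singleton, or_comm]))

lemma glueEquiv_mp (j : Fin d) (s : Finset (Fin d)) (hj : j ∉ s) :
    MeasurePreserving (glueEquiv j s hj) volume volume := by
  have h1 : MeasurePreserving
      (Prod.map (id : ({i : Fin d // i ∈ s} → ℝ) → ({i : Fin d // i ∈ s} → ℝ))
        ⇑(MeasurableEquiv.funUnique {i : Fin d // i ∈ ({j} : Finset (Fin d))} ℝ).symm)
      volume volume :=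
    (MeasurePreserving.id volume).prod
      ((MeasureTheory.volume_preserving_funUnique _ ℝ).symm _)
  have h2 := (MeasureTheory.volume_preserving_piFinsetUnion (fun _ : Fin d => ℝ)
        (Finset.disjoint_singleton_right.mpr hj)).comp h1
  have h3 := (MeasureTheory.volume_measurePreserving_piCongrLeft
      (fun _ : {i : Fin d // i ∈ insert j s} => ℝ)
      (Equiv.subtypeEquivRight (q := fun i => i ∈ insert j s) (fun i => by
          simp [Finset.mem_union, Finset.mem_insert, Finset.mem_singleton, or_comm]))).comp h2
  exact h3

lemma glueEquiv_apply_symm (j : Fin d) (s : Finset (Fin d)) (hj : j ∉ s)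
    (F : {i : Fin d // i ∈ insert j s} → ℝ) :
    (glueEquiv j s hj).symm F =
      ((fun i => F ⟨i.1, Finset.mem_insert_of_mem i.2⟩), F ⟨j, Finset.mem_insert_self j s⟩) := by
  unfold glueEquiv
  ext i
  · rfl
  · rfl

lemma glueEquiv_apply (j : Fin d) (s : Finset (Fin d)) (hj : j ∉ s)
    (y : {i : Fin d // i ∈ s} → ℝ) (τ : ℝ) :
    glueEquiv j s hj (y, τ) =
      fun i : {i : Fin d // i ∈ insert j s} => if h : i.1 ∈ s then y ⟨i.1, h⟩ else τ := by
  set F : {i : Fin d // i ∈ insert j s} → ℝ :=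
    fun i => if h : i.1 ∈ s then y ⟨i.1, h⟩ else τ with hF
  have h := glueEquiv_apply_symm j s hj F
  have h1 : (glueEquiv j s hj).symm F = (y, τ) := by
    rw [h, Prod.mk.injEq]
    refine ⟨funext fun i => ?_, by simp [hF, hj]⟩
    simp [hF, i.2]
  have := congrArg (glueEquiv j s hj) h1
  simpa using this.symm

lemma glueEquiv_preimage (a b : Fin d → ℝ) (j : Fin d) (s : Finset (Fin d)) (hj : j ∉ s) :
    ⇑(glueEquiv j s hj) ⁻¹'
        (Set.univ.pi fun i : {i : Fin d // i ∈ insert j s} => Set.Icc (a i.1) (b i.1)) =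
      (Set.univ.pi fun i : {i : Fin d // i ∈ s} => Set.Icc (a i.1) (b i.1)) ×ˢ
        Set.Icc (a j) (b j) := by
  ext ⟨y, τ⟩
  simp only [Set.mem_preimage, Set.mem_pi, Set.mem_univ, forall_true_left, Set.mem_prod,
    glueEquiv_apply]
  constructor
  · intro h
    refine ⟨fun i => ?_, ?_⟩
    · have := h ⟨i.1, Finset.mem_insert_of_mem i.2⟩
      simpa [i.2] using this
    · have := h ⟨j, Finset.mem_insert_self j s⟩
      simpa [hj] using this
  · rintro ⟨h1, h2⟩ i
    by_cases hi : i.1 ∈ s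
    · simpa [hi] using h1 ⟨i.1, hi⟩
    · have hij : i.1 = j := (Finset.mem_insert.1 i.2).resolve_right hi
      simpa [hi, hij, hj] using h2

lemma box_insert (a b : Fin d → ℝ) {j : Fin d} {s : Finset (Fin d)} (hj : j ∉ s)
    (F : ({i : Fin d // i ∈ insert j s} → ℝ) → ℝ)
    (hF : IntegrableOn F
      (Set.univ.pi fun i : {i : Fin d // i ∈ insert j s} => Set.Icc (a i.1) (b i.1))) :
    ∫ t in Set.univ.pi (fun i : {i : Fin d // i ∈ insert j s} => Set.Icc (a i.1) (b i.1)), F t =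
      ∫ y : {i : Fin d // i ∈ s} → ℝ in
          Set.univ.pi (fun i : {i : Fin d // i ∈ s} => Set.Icc (a i.1) (b i.1)),
        ∫ τ in Set.Icc (a j) (b j),
          F (fun i => if h : i.1 ∈ s then y ⟨i.1, h⟩ else τ) := by
  have hmp := glueEquiv_mp j s hj
  have hemb := (glueEquiv j s hj).measurableEmbedding
  rw [← hmp.setIntegral_preimage_emb hemb F _]
  rw [glueEquiv_preimage a b j s hj]
  have hInt : IntegrableOn (fun z => F (glueEquiv j s hj z))
      ((Set.univ.pi fun i : {i : Fin d // i ∈ s} => Set.Icc (a i.1) (b i.1)) ×ˢ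
        Set.Icc (a j) (b j)) (volume.prod volume) := by
    rw [← glueEquiv_preimage a b j s hj]
    exact ((hmp.restrict_preimage_emb hemb _).integrable_comp_emb hemb).mpr hF
  have h2 : (∫ z in (Set.univ.pi fun i : {i : Fin d // i ∈ s} =>
        Set.Icc (a i.1) (b i.1)) ×ˢ Set.Icc (a j) (b j), F (glueEquiv j s hj z)) =
      ∫ y : {i : Fin d // i ∈ s} → ℝ in
          Set.univ.pi (fun i : {i : Fin d // i ∈ s} => Set.Icc (a i.1) (b i.1)),
        ∫ τ in Set.Icc (a j) (b j), F (glueEquiv j s hj (y, τ)) :=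
    MeasureTheory.setIntegral_prod _ hInt
  rw [h2]
  simp_rw [glueEquiv_apply]

end glue

lemma integrableOn_kernelMul {ι : Type*} [Fintype ι] (G : (ι → ℝ) → ℝ) (hG : Continuous G)
    (K : ι → ℝ → ℝ) (hK : ∀ i, Measurable (K i)) (hKb : ∀ i t, |K i t| ≤ 1)
    (A B : ι → ℝ) :
    IntegrableOn (fun t => G t * ∏ i, K i (t i))
      (Set.univ.pi fun i => Set.Icc (A i) (B i)) := by
  have hbox : IsCompact (Set.univ.pi fun i => Set.Icc (A i) (B i)) :=
    isCompact_univ_pi (fun i => isCompact_Icc)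
  have hGint : IntegrableOn G (Set.univ.pi fun i => Set.Icc (A i) (B i)) :=
    hG.continuousOn.integrableOn_compact hbox
  have hKm : Measurable (fun t : ι → ℝ => ∏ i, K i (t i)) :=
    Finset.measurable_prod _ (fun i _ => (hK i).comp (measurable_pi_apply i))
  have := Integrable.bdd_mul (c := 1) hGint (hKm.aestronglyMeasurable.restrict)
    (Filter.Eventually.of_forall fun t => by
      rw [Real.norm_eq_abs, Finset.abs_prod]
      exact Finset.prod_le_one (fun i _ => abs_nonneg _) (fun i _ => hKb i (t i)))
  simpa [mul_comm, IntegrableOn] using this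

lemma hasDerivAt_line {d : ℕ} (g : (Fin d → ℝ) → ℝ) (hg : Differentiable ℝ g)
    (p : Fin d → ℝ) (j : Fin d) (τ : ℝ) :
    HasDerivAt (fun τ => g (p + τ • (Pi.single j 1 : Fin d → ℝ)))
      (fderiv ℝ g (p + τ • (Pi.single j 1 : Fin d → ℝ)) (Pi.single j 1)) τ := by
  have h1 : HasDerivAt (fun τ : ℝ => p + τ • (Pi.single j 1 : Fin d → ℝ))
      (Pi.single j 1 : Fin d → ℝ) τ := by
    simpa using ((hasDerivAt_id τ).smul_const (Pi.single j 1 : Fin d → ℝ)).const_add p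
  exact ((hg (p + τ • (Pi.single j 1 : Fin d → ℝ))).hasFDerivAt.comp_hasDerivAt τ h1)

lemma anchoredTerm_insert {d : ℕ} (f : (Fin d → ℝ) → ℝ) (c x : Fin d → ℝ) {j : Fin d}
    {s : Finset (Fin d)} (hj : j ∉ s) :
    anchoredTerm f c (insert j s) x =
      anchoredTerm f (Function.update c j (x j)) s x - anchoredTerm f c s x := by
  unfold anchoredTerm
  rw [Finset.sum_powerset_insert hj]
  have h1 : ∀ v ∈ s.powerset, (-1 : ℝ) ^ ((insert j s).card - v.card) *
      f (fun i => if i ∈ v then x i else c i) =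
      -((-1 : ℝ) ^ (s.card - v.card) * f (fun i => if i ∈ v then x i else c i)) := by
    intro v hv
    have hle : v.card ≤ s.card := Finset.card_le_card (Finset.mem_powerset.1 hv)
    rw [Finset.card_insert_of_notMem hj]
    have : s.card + 1 - v.card = (s.card - v.card) + 1 := by omega
    rw [this, pow_succ]
    ring
  have h2 : ∀ v ∈ s.powerset, (-1 : ℝ) ^ ((insert j s).card - (insert j v).card) *
      f (fun i => if i ∈ insert j v then x i else c i) =
      (-1 : ℝ) ^ (s.card - v.card) *
        f (fun i => if i ∈ v then x i else Function.update c j (x j) i) := by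
    intro v hv
    have hjv : j ∉ v := fun h => hj (Finset.mem_powerset.1 hv h)
    rw [Finset.card_insert_of_notMem hj, Finset.card_insert_of_notMem hjv]
    have : s.card + 1 - (v.card + 1) = s.card - v.card := by omega
    rw [this]
    congr 2
    funext i
    by_cases hij : i = j
    · subst hij
      simp [hjv, Finset.mem_insert_self]
    · by_cases hiv : i ∈ v <;>
        simp [Finset.mem_insert, hij, hiv, Function.update_of_ne hij]
  rw [Finset.sum_congr rfl h1, Finset.sum_congr rfl h2, Finset.sum_neg_distrib]
  ring

lemma key {d : ℕ} (a b : Fin d → ℝ) (l : List (Fin d)) :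
    l.Nodup →
    ∀ u : Finset (Fin d), u = l.toFinset →
    ∀ f : (Fin d → ℝ) → ℝ, ContDiff ℝ l.length f →
    ∀ c ∈ Set.univ.pi fun i => Set.Icc (a i) (b i),
      ∀ x ∈ Set.univ.pi fun i => Set.Icc (a i) (b i),
        anchoredTerm f c u x =
          ∫ t : {i : Fin d // i ∈ u} → ℝ in
              Set.univ.pi (fun i : {i : Fin d // i ∈ u} => Set.Icc (a i.1) (b i.1)),
            mfold l f (fun i => if h : i ∈ u then t ⟨i, h⟩ else c i) *
              ∏ i : {i : Fin d // i ∈ u}, anchorKernel (c i.1) (t i) (x i.1) := by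
  induction l with
  | nil =>
    rintro - u hu f hf c hc x hx
    subst hu
    haveI hempty : IsEmpty {i : Fin d // i ∈ ([] : List (Fin d)).toFinset} :=
      ⟨fun i => Finset.notMem_empty i.1 (by simpa using i.2)⟩
    have hbox : (Set.univ.pi fun i : {i : Fin d // i ∈ ([] : List (Fin d)).toFinset} =>
        Set.Icc (a i.1) (b i.1)) = Set.univ := by
      ext t; simp only [Set.mem_univ_pi, Set.mem_univ, iff_true]; exact fun i => isEmptyElim i
    rw [hbox]
    have hval : ∀ t : {i : Fin d // i ∈ ([] : List (Fin d)).toFinset} → ℝ,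
        mfold [] f (fun i => if h : i ∈ ([] : List (Fin d)).toFinset then t ⟨i, h⟩ else c i) *
          ∏ i : {i : Fin d // i ∈ ([] : List (Fin d)).toFinset},
            anchorKernel (c i.1) (t i) (x i.1) = f c := by
      intro t
      have hpt : (fun i => if h : i ∈ ([] : List (Fin d)).toFinset then t ⟨i, h⟩ else c i) = c := by
        funext i; simp
      rw [hpt]
      rw [Finset.univ_eq_empty, Finset.prod_empty, mul_one]; rfl
    simp only [hval]
    rw [Measure.restrict_univ, integral_const]
    have h1 : (volume : Measure ({i : Fin d // i ∈ ([] : List (Fin d)).toFinset} → ℝ))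
        Set.univ = 1 := by
      rw [show (volume : Measure ({i : Fin d // i ∈ ([] : List (Fin d)).toFinset} → ℝ)) =
        Measure.pi (fun _ => volume) from rfl, Measure.pi_univ]
      rw [Finset.univ_eq_empty, Finset.prod_empty]
    rw [measureReal_def, h1]
    simp [anchoredTerm]
  | cons j l' ih =>
    rintro hnd u hu f hf c hc x hx
    have hjl : j ∉ l' := (List.nodup_cons.1 hnd).1
    have hnd' : l'.Nodup := (List.nodup_cons.1 hnd).2
    have hjs : j ∉ l'.toFinset := by simpa using hjl
    have hu' : u = insert j l'.toFinset := by rw [hu, List.toFinset_cons]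
    subst hu'
    set s := l'.toFinset with hs
    have hf' : ContDiff ℝ (l'.length : ℕ) f := hf.of_le (by exact_mod_cast Nat.le_succ _)
    have hC1 : ContDiff ℝ ((1 : ℕ) : ℕ∞) (mfold l' f) :=
      contDiff_mfold l' 1 f (by simpa [List.length_cons] using hf)
    have hcont_l : Continuous (mfold (j :: l') f) :=
      (contDiff_mfold (j :: l') 0 f (by simpa using hf)).continuous
    have hcont_l' : Continuous (mfold l' f) := hC1.continuous
    set F : ({i : Fin d // i ∈ insert j s} → ℝ) → ℝ := fun t =>
      mfold (j :: l') f (fun i => if h : i ∈ insert j s then t ⟨i, h⟩ else c i) *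
        ∏ i : {i : Fin d // i ∈ insert j s}, anchorKernel (c i.1) (t i) (x i.1) with hFdef
    have hptcont : ∀ (u' : Finset (Fin d)) (cc : Fin d → ℝ), Continuous
        (fun (t : {i : Fin d // i ∈ u'} → ℝ) (i : Fin d) =>
          if h : i ∈ u' then t ⟨i, h⟩ else cc i) := by
      intro u' cc
      apply continuous_pi
      intro i
      by_cases h : i ∈ u'
      · simpa [h] using (continuous_apply (⟨i, h⟩ : {i : Fin d // i ∈ u'}))
      · simpa [h] using (continuous_const : Continuous fun _ : {i : Fin d // i ∈ u'} → ℝ => cc i)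
    have hFint : IntegrableOn F
        (Set.univ.pi fun i : {i : Fin d // i ∈ insert j s} => Set.Icc (a i.1) (b i.1)) := by
      exact @integrableOn_kernelMul _ (FinsetCoe.fintype (insert j s))
        (fun t => mfold (j :: l') f (fun i => if h : i ∈ insert j s then t ⟨i, h⟩ else c i))
        (hcont_l.comp (hptcont (insert j s) c))
        (fun i v => anchorKernel (c i.1) v (x i.1))
        (fun i => measurable_anchorKernel _ _)
        (fun i t => abs_anchorKernel_le _ _ _)
        (fun i => a i.1) (fun i => b i.1)
    rw [box_insert a b hjs F hFint]
    have hinner : ∀ y : {i : Fin d // i ∈ s} → ℝ,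
        (∫ τ in Set.Icc (a j) (b j),
            F (fun i => if h : i.1 ∈ s then y ⟨i.1, h⟩ else τ)) =
          (mfold l' f (fun i => if h : i ∈ s then y ⟨i, h⟩ else Function.update c j (x j) i)
            - mfold l' f (fun i => if h : i ∈ s then y ⟨i, h⟩ else c i)) *
            ∏ i : {i : Fin d // i ∈ s}, anchorKernel (c i.1) (y i) (x i.1) := by
      intro y
      set p : Fin d → ℝ := fun i => if h : i ∈ s then y ⟨i, h⟩ else if i = j then 0 else c i
        with hp
      have hQ : ∀ τ : ℝ, p + τ • (Pi.single j 1 : Fin d → ℝ) =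
          fun i => if h : i ∈ s then y ⟨i, h⟩ else Function.update c j τ i := by
        intro τ; funext i
        by_cases h1 : i ∈ s
        · have hij : i ≠ j := fun hij => hjs (hij ▸ h1)
          simp [hp, h1, Pi.single_eq_of_ne hij]
        · by_cases h2 : i = j
          · subst h2
            simp [hp, h1, Pi.single_eq_same]
          · simp [hp, h1, h2, Pi.single_eq_of_ne h2, Function.update_of_ne h2]
      have hsplit : ∀ τ : ℝ,
          (∏ i : {i : Fin d // i ∈ insert j s},
            anchorKernel (c i.1) (if h : i.1 ∈ s then y ⟨i.1, h⟩ else τ) (x i.1)) =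
          anchorKernel (c j) τ (x j) *
            ∏ i : {i : Fin d // i ∈ s}, anchorKernel (c i.1) (y i) (x i.1) := by
        intro τ
        have e1 : ∀ i : {i : Fin d // i ∈ s},
            anchorKernel (c i.1) (y i) (x i.1) =
            anchorKernel (c i.1) (if h : i.1 ∈ s then y ⟨i.1, h⟩ else τ) (x i.1) := by
          intro i; simp [i.2]
        rw [Fintype.prod_congr _ _ e1,
          Finset.prod_coe_sort s
            (fun k => anchorKernel (c k) (if h : k ∈ s then y ⟨k, h⟩ else τ) (x k)),
          Finset.prod_coe_sort (insert j s)
            (fun k => anchorKernel (c k) (if h : k ∈ s then y ⟨k, h⟩ else τ) (x k)),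
          Finset.prod_insert hjs]
        simp [hjs]
      have hPt : ∀ τ : ℝ,
          (fun i => if h : i ∈ insert j s then
            (if h' : i ∈ s then y ⟨i, h'⟩ else τ) else c i) =
            p + τ • (Pi.single j 1 : Fin d → ℝ) := by
        intro τ; funext i
        by_cases h1 : i ∈ s
        · have hij : i ≠ j := fun hij => hjs (hij ▸ h1)
          simp [hp, h1, Finset.mem_insert_of_mem, Pi.single_eq_of_ne hij]
        · by_cases h2 : i = j
          · subst h2
            simp [hp, h1, Pi.single_eq_same]
          · have h3 : i ∉ insert j s := by simp [Finset.mem_insert, h1, h2]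
            simp [hp, h1, h2, h3, Pi.single_eq_of_ne h2]
      have hFg : ∀ τ : ℝ,
          F (fun i : {i : Fin d // i ∈ insert j s} => if h : i.1 ∈ s then y ⟨i.1, h⟩ else τ) =
          (mfold (j :: l') f (p + τ • (Pi.single j 1 : Fin d → ℝ)) *
              anchorKernel (c j) τ (x j)) *
            ∏ i : {i : Fin d // i ∈ s}, anchorKernel (c i.1) (y i) (x i.1) := by
        intro τ
        rw [hFdef]
        simp only []
        rw [hPt τ, hsplit τ]
        ring
      rw [setIntegral_congr_fun measurableSet_Icc (fun τ _ => hFg τ)]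
      rw [integral_mul_const]
      congr 1
      have hg1 : ∀ τ : ℝ,
          deriv (fun τ => mfold l' f (p + τ • (Pi.single j 1 : Fin d → ℝ))) τ =
          mfold (j :: l') f (p + τ • (Pi.single j 1 : Fin d → ℝ)) := fun τ =>
        (hasDerivAt_line (mfold l' f) (hC1.differentiable (by norm_num)) p j τ).deriv
      have haff : ContDiff ℝ ((1 : ℕ) : ℕ∞)
          (fun τ : ℝ => p + τ • (Pi.single j 1 : Fin d → ℝ)) :=
        contDiff_const.add (contDiff_id.smul contDiff_const)
      have hgC : ContDiff ℝ 1 (fun τ => mfold l' f (p + τ • (Pi.single j 1 : Fin d → ℝ))) :=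
        hC1.comp haff
      have hftc := ftc_kernel (fun τ => mfold l' f (p + τ • (Pi.single j 1 : Fin d → ℝ)))
        hgC (hc j trivial) (hx j trivial)
      simp only [hg1] at hftc
      rw [hftc, hQ (x j), hQ (c j)]
      simp [Function.update_eq_self]
    rw [setIntegral_congr_fun (MeasurableSet.univ_pi fun i => measurableSet_Icc)
      (fun y _ => hinner y)]
    simp_rw [sub_mul]
    set c' : Fin d → ℝ := Function.update c j (x j) with hc'
    have hc'box : c' ∈ Set.univ.pi fun i => Set.Icc (a i) (b i) := by
      intro i _
      by_cases h : i = j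
      · subst h; simp [hc', Function.update_self]; exact hx i trivial
      · simp [hc', Function.update_of_ne h]; exact hc i trivial
    have hint1 : IntegrableOn (fun y : {i : Fin d // i ∈ s} → ℝ =>
        mfold l' f (fun i => if h : i ∈ s then y ⟨i, h⟩ else Function.update c j (x j) i) *
          ∏ i : {i : Fin d // i ∈ s}, anchorKernel (c i.1) (y i) (x i.1))
        (Set.univ.pi fun i : {i : Fin d // i ∈ s} => Set.Icc (a i.1) (b i.1)) :=
      @integrableOn_kernelMul _ (FinsetCoe.fintype s) _
        (hcont_l'.comp (hptcont s (Function.update c j (x j))))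
        (fun i v => anchorKernel (c i.1) v (x i.1))
        (fun i => measurable_anchorKernel _ _) (fun i t => abs_anchorKernel_le _ _ _) _ _
    have hint2 : IntegrableOn (fun y : {i : Fin d // i ∈ s} → ℝ =>
        mfold l' f (fun i => if h : i ∈ s then y ⟨i, h⟩ else c i) *
          ∏ i : {i : Fin d // i ∈ s}, anchorKernel (c i.1) (y i) (x i.1))
        (Set.univ.pi fun i : {i : Fin d // i ∈ s} => Set.Icc (a i.1) (b i.1)) :=
      @integrableOn_kernelMul _ (FinsetCoe.fintype s) _
        (hcont_l'.comp (hptcont s c))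
        (fun i v => anchorKernel (c i.1) v (x i.1))
        (fun i => measurable_anchorKernel _ _) (fun i t => abs_anchorKernel_le _ _ _) _ _
    rw [integral_sub hint1 hint2]
    rw [anchoredTerm_insert f c x hjs]
    have hIH2 := ih hnd' s rfl f hf' c hc x hx
    have hIH1 := ih hnd' s rfl f hf' c' hc'box x hx
    rw [hIH2, hIH1]
    congr 1
    refine setIntegral_congr_fun (MeasurableSet.univ_pi fun i => measurableSet_Icc)
      (fun y _ => ?_)
    have hker : ∀ i : {i : Fin d // i ∈ s},
        anchorKernel (c' i.1) (y i) (x i.1) = anchorKernel (c i.1) (y i) (x i.1) := by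
      intro i
      have hij : i.1 ≠ j := fun h => hjs (h ▸ i.2)
      rw [hc', Function.update_of_ne hij]
    rw [Fintype.prod_congr _ _ hker]

/-- for `f` which is `|u|` times continuously differentiable on the
box `D = ∏ [a i, b i]`, the anchored term has the integral representation
`f_{u,c}(x) = ∫_{D_u} ∂_u f(t^{u,c}) ∏_{i∈u} M_i(t_i, x_i) dt_u`. -/
theorem statement_7 {d : ℕ} (a b : Fin d → ℝ) (hab : ∀ i, a i < b i)
    (u : Finset (Fin d))
    (f : (Fin d → ℝ) → ℝ) (hf : ContDiff ℝ u.card f) :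
    ∀ c ∈ Set.univ.pi fun i => Set.Icc (a i) (b i),
      ∀ x ∈ Set.univ.pi fun i => Set.Icc (a i) (b i),
        anchoredTerm f c u x =
          ∫ t : {i : Fin d // i ∈ u} → ℝ in
              Set.univ.pi (fun i : {i : Fin d // i ∈ u} => Set.Icc (a i.1) (b i.1)),
            mixedPartial u f (fun i => if h : i ∈ u then t ⟨i, h⟩ else c i) *
              ∏ i : {i : Fin d // i ∈ u}, anchorKernel (c i.1) (t i) (x i.1) := by
  intro c hc x hx
  have hmix : mixedPartial u f = mfold u.toList f := rfl
  rw [hmix]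
  exact key a b u.toList u.nodup_toList u u.toList_toFinset.symm f
    (by rwa [Finset.length_toList]) c hc x hx
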